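/- arXiv:1811.05207 — 3 statements merged into one kernel-verified Lean document; each statement's English description precedes it below -/
import Mathlib

section
/- Kernel of the linearized Schrödinger operator: let φ be a tuple of essentially bounded measurable functions and let h = (h_1,…,h_N) with h_i ∈ L²(X_i,m_i). Then h_i + L_{φ,i}(h) = 0 m_i-a.e. for every i = 1,…,N if and only if there exist real constants c_1,…,c_N with Σ_{i=1}^N c_i = 0 and h_i = c_i m_i-a.e. for every i. In particular, the kernel of id + L_φ on ∏_{i=1}^N L²(X_i,m_i) has dimension N−1. -/
open MeasureTheory Filter
open scoped ENNReal

noncomputable section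

/-- The density kernel `γ_φ(x) = K(x) exp(∑_j φ_j(x_j))`. -/
def gammaFn {N : ℕ} {X : Fin N → Type*} (K : (∀ i, X i) → ℝ) (φ : ∀ i, X i → ℝ)
    (x : ∀ i, X i) : ℝ :=
  K x * Real.exp (∑ j, φ j (x j))

/-- `T_i(φ)(x_i) = ∫_{X_{-i}} K(x_i, x_{-i}) exp(∑_j φ_j(x_j)) dm_{-i}(x_{-i})`.
Since every `m j` is a probability measure, integrating over the full product
(with the `i`-th coordinate replaced by `x_i` via `Function.update`) agrees with
integrating over `∏_{j ≠ i} X_j`. -/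
def schrT {N : ℕ} {X : Fin N → Type*} [∀ i, MeasurableSpace (X i)]
    (m : ∀ i, Measure (X i)) (K : (∀ i, X i) → ℝ) (φ : ∀ i, X i → ℝ)
    (i : Fin N) (xi : X i) : ℝ :=
  ∫ y, gammaFn K φ (Function.update y i xi) ∂Measure.pi m

/-- `L_{φ,i}(h)(x_i)`, the conditional-expectation type operator obtained by
linearizing the Schrödinger system. -/
def schrL {N : ℕ} {X : Fin N → Type*} [∀ i, MeasurableSpace (X i)]
    (m : ∀ i, Measure (X i)) (K : (∀ i, X i) → ℝ) (φ h : ∀ i, X i → ℝ)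
    (i : Fin N) (xi : X i) : ℝ :=
  (∫ y, gammaFn K φ (Function.update y i xi) *
      ∑ j ∈ Finset.univ.erase i, h j (Function.update y i xi j) ∂Measure.pi m) /
  (∫ y, gammaFn K φ (Function.update y i xi) ∂Measure.pi m)

/-- A tuple of essentially bounded measurable functions. -/
def BddTuple {N : ℕ} {X : Fin N → Type*} [∀ i, MeasurableSpace (X i)]
    (m : ∀ i, Measure (X i)) (φ : ∀ i, X i → ℝ) : Prop :=
  ∀ i, Measurable (φ i) ∧ MemLp (φ i) ⊤ (m i)

/-- Membership in `E`: essentially bounded measurable tuples with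
`∫ φ_i dm_i = 0` for `i = 1, …, N-1` (i.e. all but the last index). -/
def InE {N : ℕ} {X : Fin N → Type*} [∀ i, MeasurableSpace (X i)]
    (m : ∀ i, Measure (X i)) (φ : ∀ i, X i → ℝ) : Prop :=
  BddTuple m φ ∧ ∀ i : Fin N, (i : ℕ) < N - 1 → ∫ x, φ i x ∂m i = 0

/-- Membership in `F`: essentially bounded measurable tuples whose integrals all coincide. -/
def InF {N : ℕ} {X : Fin N → Type*} [∀ i, MeasurableSpace (X i)]
    (m : ∀ i, Measure (X i)) (μ : ∀ i, X i → ℝ) : Prop :=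
  BddTuple m μ ∧ ∀ i j, ∫ x, μ i x ∂m i = ∫ x, μ j x ∂m j

/-- Membership in `F_{++}`: members of `F` which are bounded away from `0`. -/
def InFpp {N : ℕ} {X : Fin N → Type*} [∀ i, MeasurableSpace (X i)]
    (m : ∀ i, Measure (X i)) (μ : ∀ i, X i → ℝ) : Prop :=
  InF m μ ∧ ∀ i, ∃ c : ℝ, 0 < c ∧ ∀ᵐ x ∂m i, c ≤ μ i x

/-- Membership in `F_{++,M}`: members of `F_{++}` with `1/M ≤ μ_i ≤ M` a.e. -/
def InFppM {N : ℕ} {X : Fin N → Type*} [∀ i, MeasurableSpace (X i)]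
    (m : ∀ i, Measure (X i)) (M : ℝ) (μ : ∀ i, X i → ℝ) : Prop :=
  InFpp m μ ∧ ∀ i, ∀ᵐ x ∂m i, 1 / M ≤ μ i x ∧ μ i x ≤ M

end

section Aux

open Function


variable {N : ℕ} {X : Fin N → Type*} [∀ i, MeasurableSpace (X i)]
  (m : ∀ i, Measure (X i)) [∀ i, IsProbabilityMeasure (m i)]

theorem mp_update (i : Fin N) :
    MeasurePreserving (fun p : X i × (∀ j, X j) => Function.update p.2 i p.1)
      ((m i).prod (Measure.pi m)) (Measure.pi m) := by
  have hT : Measurable (fun p : X i × (∀ j, X j) => Function.update p.2 i p.1) :=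
    measurable_update'.comp (measurable_snd.prodMk measurable_fst)
  refine ⟨hT, ?_⟩
  refine (Measure.pi_eq fun s hs => ?_).symm
  rw [Measure.map_apply hT (MeasurableSet.univ_pi hs)]
  have hpre : (fun p : X i × (∀ j, X j) => Function.update p.2 i p.1) ⁻¹' Set.pi Set.univ s
      = (s i) ×ˢ (Set.pi Set.univ (Function.update s i Set.univ)) := by
    ext p
    simp only [Set.mem_preimage, Set.mem_pi, Set.mem_univ, forall_true_left, Set.mem_prod]
    constructor
    · intro hp
      refine ⟨by simpa using hp i, fun j => ?_⟩
      by_cases hj : j = i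
      · subst hj; simp
      · simpa [Function.update_of_ne hj] using hp j
    · rintro ⟨h1, h2⟩ j
      by_cases hj : j = i
      · subst hj; simpa using h1
      · have := h2 j
        simpa [Function.update_of_ne hj] using this
  rw [hpre, Measure.prod_prod, Measure.pi_pi]
  have : ∀ j, m j (Function.update s i Set.univ j)
      = Function.update (fun j => m j (s j)) i 1 j := by
    intro j
    by_cases hj : j = i
    · subst hj; simp
    · simp [Function.update_of_ne hj]
  rw [Finset.prod_congr rfl fun j _ => this j,
    Finset.prod_update_of_mem (Finset.mem_univ i), one_mul,
    ← Finset.mul_prod_erase Finset.univ _ (Finset.mem_univ i)]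
  simp [Finset.sdiff_singleton_eq_erase]

theorem mp_eval (j : Fin N) :
    MeasurePreserving (fun x : ∀ k, X k => x j) (Measure.pi m) (m j) := by
  refine ⟨measurable_pi_apply j, ?_⟩
  have h1 := mp_update m j
  rw [← h1.map_eq, Measure.map_map (measurable_pi_apply j) h1.measurable]
  have : ((fun x : ∀ k, X k => x j) ∘ fun p : X j × (∀ k, X k) => Function.update p.2 j p.1)
      = Prod.fst := by
    funext p; simp [Function.comp]
  rw [this, Measure.map_fst_prod]
  simp

theorem ae_comp_update (i : Fin N) {Q : (∀ j, X j) → Prop}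
    (hQ : ∀ᵐ x ∂Measure.pi m, Q x) :
    ∀ᵐ xi ∂m i, ∀ᵐ y ∂Measure.pi m, Q (Function.update y i xi) := by
  have := (mp_update m i).quasiMeasurePreserving.ae hQ
  exact Measure.ae_ae_of_ae_prod this

theorem integral_update_eq (i : Fin N) {f : (∀ j, X j) → ℝ}
    (hfi : Integrable f (Measure.pi m)) :
    ∫ x, f x ∂Measure.pi m
      = ∫ xi, ∫ y, f (Function.update y i xi) ∂Measure.pi m ∂m i := by
  have h1 := mp_update m i
  have h2 : Integrable (fun p : X i × (∀ j, X j) => f (Function.update p.2 i p.1))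
      ((m i).prod (Measure.pi m)) :=
    (h1.integrable_comp hfi.aestronglyMeasurable).mpr hfi
  have key := integral_map (μ := (m i).prod (Measure.pi m)) h1.measurable.aemeasurable
    (f := f) (by rw [h1.map_eq]; exact hfi.aestronglyMeasurable)
  rw [h1.map_eq] at key
  rw [key]
  exact MeasureTheory.integral_prod _ h2

theorem ae_integrable_update (i : Fin N) {f : (∀ j, X j) → ℝ}
    (hfi : Integrable f (Measure.pi m)) :
    ∀ᵐ xi ∂m i, Integrable (fun y => f (Function.update y i xi)) (Measure.pi m) := by
  have h1 := mp_update m i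
  have h2 : Integrable (fun p : X i × (∀ j, X j) => f (Function.update p.2 i p.1))
      ((m i).prod (Measure.pi m)) :=
    (h1.integrable_comp hfi.aestronglyMeasurable).mpr hfi
  exact h2.prod_right_ae

end Aux

/-- Kernel of the linearized Schrödinger operator: `h + L_φ(h) = 0`
a.e. iff the components of `h` are a.e. equal to constants summing to `0`
(hence the kernel of `id + L_φ` has dimension `N - 1`). -/
theorem kernel_linearized_operator
    {N : ℕ} (hN : 2 ≤ N) {X : Fin N → Type*} [∀ i, MeasurableSpace (X i)]
    (m : ∀ i, MeasureTheory.Measure (X i)) [∀ i, MeasureTheory.IsProbabilityMeasure (m i)]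
    (K : (∀ i, X i) → ℝ) (a b : ℝ) (ha : 0 < a) (hab : a ≤ b)
    (hK : Measurable K) (hKb : ∀ᵐ x ∂MeasureTheory.Measure.pi m, a ≤ K x ∧ K x ≤ b)
    (φ : ∀ i, X i → ℝ) (hφ : BddTuple m φ)
    (h : ∀ i, X i → ℝ) (hhm : ∀ i, Measurable (h i)) (hh2 : ∀ i, MemLp (h i) 2 (m i)) :
    (∀ i, ∀ᵐ xi ∂m i, h i xi + schrL m K φ h i xi = 0) ↔
      ∃ c : Fin N → ℝ, ∑ i, c i = 0 ∧ ∀ i, h i =ᵐ[m i] fun _ => c i := by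
  classical
  set P := MeasureTheory.Measure.pi m with hPdef
  -- measurability of the kernel
  have hgm : Measurable (gammaFn K φ) := by
    apply hK.mul
    exact (Finset.measurable_sum Finset.univ fun j _ =>
      ((hφ j).1.comp (measurable_pi_apply j))).exp
  -- a.e. bounds on φ pulled back to the product
  have hφbd : ∀ j, ∀ᵐ x ∂P, |φ j (x j)| ≤ (eLpNormEssSup (φ j) (m j)).toReal := by
    intro j
    have h2 : eLpNormEssSup (φ j) (m j) < ⊤ := by
      have := (hφ j).2.2; rwa [eLpNorm_exponent_top] at this
    have h1 : ∀ᵐ t ∂m j, |φ j t| ≤ (eLpNormEssSup (φ j) (m j)).toReal := by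
      filter_upwards [ae_le_eLpNormEssSup (f := φ j) (μ := m j)] with t ht
      have h3 : ((‖φ j t‖₊ : ℝ≥0∞)).toReal ≤ (eLpNormEssSup (φ j) (m j)).toReal :=
        ENNReal.toReal_mono h2.ne ht
      simpa [Real.norm_eq_abs] using h3
    exact (mp_eval m j).quasiMeasurePreserving.ae h1
  set C : ℝ := ∑ j, (eLpNormEssSup (φ j) (m j)).toReal with hCdef
  set α : ℝ := a * Real.exp (-C) with hαdef
  set β : ℝ := b * Real.exp C with hβdef
  have hα0 : 0 < α := mul_pos ha (Real.exp_pos _)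
  have hgb : ∀ᵐ x ∂P, α ≤ gammaFn K φ x ∧ gammaFn K φ x ≤ β := by
    have hall : ∀ᵐ x ∂P, ∀ j, |φ j (x j)| ≤ (eLpNormEssSup (φ j) (m j)).toReal :=
      ae_all_iff.mpr hφbd
    filter_upwards [hKb, hall] with x hx1 hx2
    have hsum : |∑ j, φ j (x j)| ≤ C := by
      calc |∑ j, φ j (x j)| ≤ ∑ j, |φ j (x j)| := Finset.abs_sum_le_sum_abs _ _
      _ ≤ C := Finset.sum_le_sum fun j _ => hx2 j
    have h1 : Real.exp (-C) ≤ Real.exp (∑ j, φ j (x j)) :=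
      Real.exp_le_exp.mpr (neg_le_of_abs_le hsum)
    have h2 : Real.exp (∑ j, φ j (x j)) ≤ Real.exp C :=
      Real.exp_le_exp.mpr (le_of_abs_le hsum)
    constructor
    · exact mul_le_mul hx1.1 h1 (Real.exp_pos _).le (le_trans ha.le hx1.1)
    · exact mul_le_mul hx1.2 h2 (Real.exp_pos _).le (le_trans (le_trans ha.le hab) le_rfl)
  -- multiplication of L² functions is integrable
  have hmulL1 : ∀ {u v : (∀ k, X k) → ℝ}, MemLp u 2 P → MemLp v 2 P →
      Integrable (fun x => u x * v x) P := by
    intro u v hu hv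
    have h := hv.smul (r := (1 : ℝ≥0∞)) hu
    rw [← memLp_one_iff_integrable]
    simpa [smul_eq_mul, Pi.mul_def] using h
  -- multiplying an integrable function by the a.e.-bounded kernel keeps integrability
  have hbdd : ∀ {u : (∀ k, X k) → ℝ}, Measurable u → Integrable u P →
      Integrable (fun x => gammaFn K φ x * u x) P := by
    intro u hum hui
    refine Integrable.mono' (hui.abs.const_mul β) (hgm.mul hum).aestronglyMeasurable ?_
    filter_upwards [hgb] with x hx
    rw [Real.norm_eq_abs, abs_mul, abs_of_pos (lt_of_lt_of_le hα0 hx.1)]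
    exact mul_le_mul_of_nonneg_right hx.2 (abs_nonneg _)
  -- pullbacks of the h j along coordinates
  have hHj : ∀ j, MemLp (fun x : ∀ k, X k => h j (x j)) 2 P := fun j =>
    (hh2 j).comp_measurePreserving (mp_eval m j)
  have hHjm : ∀ j, Measurable (fun x : ∀ k, X k => h j (x j)) := fun j =>
    (hhm j).comp (measurable_pi_apply j)
  have hHji : ∀ j, Integrable (fun x : ∀ k, X k => h j (x j)) P := fun j =>
    (hHj j).integrable one_le_two
  set S : (∀ k, X k) → ℝ := fun x => ∑ j, h j (x j) with hSdef
  have hSm : Measurable S := Finset.measurable_sum _ fun j _ => hHjm j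
  have hS2 : MemLp S 2 P := by
    have := memLp_finset_sum (μ := P) (p := 2) Finset.univ
      (f := fun j => fun x : ∀ k, X k => h j (x j)) (fun j _ => hHj j)
    simpa using this
  have hSup : ∀ (i : Fin N) (xi : X i) (y : ∀ k, X k),
      S (Function.update y i xi) = h i xi + ∑ j ∈ Finset.univ.erase i, h j (y j) := by
    intro i xi y
    show (∑ j, h j (Function.update y i xi j)) = _
    rw [← Finset.add_sum_erase Finset.univ (fun j => h j (Function.update y i xi j))
      (Finset.mem_univ i), Function.update_self]
    congr 1
    exact Finset.sum_congr rfl fun j hj => by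
      rw [Function.update_of_ne (Finset.mem_erase.mp hj).1]
  -- the denominators are a.e. bounded below by α
  have hDen : ∀ i, ∀ᵐ xi ∂m i, α ≤ ∫ y, gammaFn K φ (Function.update y i xi) ∂P := by
    intro i
    filter_upwards [ae_comp_update m i hgb] with xi hxi
    have hint : Integrable (fun y => gammaFn K φ (Function.update y i xi)) P := by
      refine Integrable.mono' (integrable_const β)
        ((hgm.comp measurable_update_left).aestronglyMeasurable) ?_
      filter_upwards [hxi] with y hy
      rw [Real.norm_eq_abs, abs_of_pos (lt_of_lt_of_le hα0 hy.1)]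
      exact hy.2
    have hαc : α = ∫ _y, α ∂P := by simp
    rw [hαc]
    refine integral_mono_ae (integrable_const α) hint ?_
    filter_upwards [hxi] with y hy
    exact hy.1
  constructor
  · -- forward direction
    intro H
    have keyB : ∀ i, ∀ᵐ xi ∂m i,
        ∫ y, gammaFn K φ (Function.update y i xi) *
          (h i xi + ∑ j ∈ Finset.univ.erase i, h j (y j)) ∂P = 0 := by
      intro i
      have hUint : Integrable
          (fun x => gammaFn K φ x * (∑ j ∈ Finset.univ.erase i, h j (x j))) P :=
        hbdd (Finset.measurable_sum _ fun j _ => hHjm j)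
          (integrable_finset_sum _ fun j _ => hHji j)
      filter_upwards [H i, hDen i, ae_comp_update m i hgb,
        ae_integrable_update m i hUint] with xi hxi hDxi hgxi hIxi
      have hIg : Integrable (fun y => gammaFn K φ (Function.update y i xi)) P := by
        refine Integrable.mono' (integrable_const β)
          ((hgm.comp measurable_update_left).aestronglyMeasurable) ?_
        filter_upwards [hgxi] with y hy
        rw [Real.norm_eq_abs, abs_of_pos (lt_of_lt_of_le hα0 hy.1)]
        exact hy.2
      have hIxi' : Integrable (fun y => gammaFn K φ (Function.update y i xi) *
          ∑ j ∈ Finset.univ.erase i, h j (y j)) P := by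
        refine hIxi.congr (Filter.Eventually.of_forall fun y => ?_)
        simp only []
        congr 1
        exact Finset.sum_congr rfl fun j hj => by
          rw [Function.update_of_ne (Finset.mem_erase.mp hj).1]
      have hD0 : (∫ y, gammaFn K φ (Function.update y i xi) ∂P) ≠ 0 :=
        (lt_of_lt_of_le hα0 hDxi).ne'
      have hnum : schrL m K φ h i xi =
          (∫ y, gammaFn K φ (Function.update y i xi) *
            ∑ j ∈ Finset.univ.erase i, h j (y j) ∂P) /
          (∫ y, gammaFn K φ (Function.update y i xi) ∂P) := by
        unfold schrL
        congr 1
        refine integral_congr_ae (Filter.Eventually.of_forall fun y => ?_)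
        simp only []
        congr 1
        exact Finset.sum_congr rfl fun j hj => by
          rw [Function.update_of_ne (Finset.mem_erase.mp hj).1]
      have hsplit : ∫ y, gammaFn K φ (Function.update y i xi) *
            (h i xi + ∑ j ∈ Finset.univ.erase i, h j (y j)) ∂P
          = (∫ y, gammaFn K φ (Function.update y i xi) ∂P) * h i xi
            + ∫ y, gammaFn K φ (Function.update y i xi) *
                ∑ j ∈ Finset.univ.erase i, h j (y j) ∂P := by
        have heq : (fun y => gammaFn K φ (Function.update y i xi) *
              (h i xi + ∑ j ∈ Finset.univ.erase i, h j (y j)))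
            = fun y => gammaFn K φ (Function.update y i xi) * h i xi
              + gammaFn K φ (Function.update y i xi) *
                  ∑ j ∈ Finset.univ.erase i, h j (y j) := by
          funext y; ring
        rw [heq, integral_add (hIg.mul_const _) hIxi', integral_mul_const]
      rw [hnum] at hxi
      have hq : (∫ y, gammaFn K φ (Function.update y i xi) *
            ∑ j ∈ Finset.univ.erase i, h j (y j) ∂P) /
          (∫ y, gammaFn K φ (Function.update y i xi) ∂P) = -h i xi := by
        linarith
      rw [div_eq_iff hD0] at hq
      rw [hsplit, hq]
      ring
    have hGi : ∀ i, Integrable (fun x => h i (x i) * (gammaFn K φ x * S x)) P := by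
      intro i
      have h1 : Integrable (fun x => gammaFn K φ x * (h i (x i) * S x)) P :=
        hbdd ((hHjm i).mul hSm) (hmulL1 (hHj i) hS2)
      have heq : (fun x => h i (x i) * (gammaFn K φ x * S x))
          = fun x => gammaFn K φ x * (h i (x i) * S x) := by
        funext x; ring
      rw [heq]; exact h1
    have keyC : ∀ i, ∫ x, h i (x i) * (gammaFn K φ x * S x) ∂P = 0 := by
      intro i
      rw [integral_update_eq m i (hGi i)]
      refine integral_eq_zero_of_ae ?_
      filter_upwards [keyB i] with xi hxi
      have hcalc : ∫ y, h i xi *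
            (gammaFn K φ (Function.update y i xi) * S (Function.update y i xi)) ∂P
          = h i xi * ∫ y, gammaFn K φ (Function.update y i xi) *
              (h i xi + ∑ j ∈ Finset.univ.erase i, h j (y j)) ∂P := by
        rw [← integral_const_mul]
        refine integral_congr_ae (Filter.Eventually.of_forall fun y => ?_)
        simp only []
        rw [hSup]
      show ∫ y, h i (Function.update y i xi i) *
          (gammaFn K φ (Function.update y i xi) * S (Function.update y i xi)) ∂P = 0
      simp only [Function.update_self]
      rw [hcalc, hxi, mul_zero]
    have hD1 : ∫ x, gammaFn K φ x * S x ^ 2 ∂P = 0 := by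
      have hsum : ∀ x : ∀ k, X k,
          ∑ i, h i (x i) * (gammaFn K φ x * S x) = gammaFn K φ x * S x ^ 2 := by
        intro x
        rw [← Finset.sum_mul]
        show S x * _ = _
        ring
      calc ∫ x, gammaFn K φ x * S x ^ 2 ∂P
          = ∫ x, ∑ i, h i (x i) * (gammaFn K φ x * S x) ∂P := by
            refine integral_congr_ae (Filter.Eventually.of_forall fun x => ?_)
            simp only []
            rw [hsum]
        _ = ∑ i, ∫ x, h i (x i) * (gammaFn K φ x * S x) ∂P :=
            integral_finset_sum _ fun i _ => hGi i
        _ = 0 := Finset.sum_eq_zero fun i _ => keyC i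
    have hS0 : ∀ᵐ x ∂P, S x = 0 := by
      have hSS : Integrable (fun x => S x ^ 2) P := by
        simpa [pow_two] using hmulL1 hS2 hS2
      have hint2 : Integrable (fun x => gammaFn K φ x * S x ^ 2) P :=
        hbdd (hSm.pow_const 2) hSS
      have hnn : 0 ≤ᵐ[P] fun x => gammaFn K φ x * S x ^ 2 := by
        filter_upwards [hgb] with x hx
        exact mul_nonneg (le_trans hα0.le hx.1) (sq_nonneg _)
      have hzero := (integral_eq_zero_iff_of_nonneg_ae hnn hint2).mp hD1
      filter_upwards [hzero, hgb] with x hx1 hx2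
      have hgpos : 0 < gammaFn K φ x := lt_of_lt_of_le hα0 hx2.1
      have hx1' : gammaFn K φ x * S x ^ 2 = 0 := hx1
      rcases mul_eq_zero.mp hx1' with h | h
      · exact absurd h hgpos.ne'
      · exact sq_eq_zero_iff.mp h
    set c : Fin N → ℝ := fun j => ∫ t, h j t ∂m j with hcdef
    have hcomp : ∀ j, ∫ x, h j (x j) ∂P = c j := by
      intro j
      have key := integral_map (μ := P) (φ := fun x : ∀ k, X k => x j)
        (mp_eval m j).measurable.aemeasurable (f := h j)
        (by rw [(mp_eval m j).map_eq]; exact (hh2 j).aestronglyMeasurable)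
      rw [(mp_eval m j).map_eq] at key
      exact key.symm
    have hconst : ∀ i, ∀ᵐ xi ∂m i, h i xi = -∑ j ∈ Finset.univ.erase i, c j := by
      intro i
      filter_upwards [ae_comp_update m i hS0] with xi hxi
      have hxi' : ∀ᵐ y ∂P, h i xi + ∑ j ∈ Finset.univ.erase i, h j (y j) = 0 := by
        filter_upwards [hxi] with y hy
        rw [← hSup i xi y]
        exact hy
      have h0 : ∫ y, (h i xi + ∑ j ∈ Finset.univ.erase i, h j (y j)) ∂P = 0 :=
        integral_eq_zero_of_ae hxi'
      rw [integral_add (integrable_const _) (integrable_finset_sum _ fun j _ => hHji j),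
        integral_const, integral_finset_sum _ (fun j _ => hHji j)] at h0
      simp only [measure_univ, probReal_univ, ENNReal.toReal_one, smul_eq_mul, one_mul] at h0
      have hre : ∑ j ∈ Finset.univ.erase i, ∫ x, h j (x j) ∂P
          = ∑ j ∈ Finset.univ.erase i, c j :=
        Finset.sum_congr rfl fun j _ => hcomp j
      rw [hre] at h0
      linarith
    have hci : ∀ i, c i = -∑ j ∈ Finset.univ.erase i, c j := by
      intro i
      have h1 : ∫ t, h i t ∂m i
          = ∫ _t, (-∑ j ∈ Finset.univ.erase i, c j : ℝ) ∂m i :=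
        integral_congr_ae (hconst i)
      rw [integral_const] at h1
      simpa [measure_univ] using h1
    refine ⟨c, ?_, ?_⟩
    · have hlt : 0 < N := by omega
      have := hci ⟨0, hlt⟩
      rw [← Finset.add_sum_erase Finset.univ c (Finset.mem_univ ⟨0, hlt⟩), this]
      ring
    · intro i
      filter_upwards [hconst i] with t ht
      rw [ht, ← hci i]
  · -- backward direction
    rintro ⟨c, hsum, hcae⟩ i
    have herase : ∀ᵐ y ∂P, ∀ j, j ≠ i → h j (y j) = c j := by
      rw [ae_all_iff]
      intro j
      have := (mp_eval m j).quasiMeasurePreserving.ae (hcae j)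
      filter_upwards [this] with y hy _
      exact hy
    have hnum : ∀ xi : X i,
        (∫ y, gammaFn K φ (Function.update y i xi) *
          ∑ j ∈ Finset.univ.erase i, h j (Function.update y i xi j) ∂P)
        = (∫ y, gammaFn K φ (Function.update y i xi) ∂P) *
            ∑ j ∈ Finset.univ.erase i, c j := by
      intro xi
      rw [← integral_mul_const]
      refine integral_congr_ae ?_
      filter_upwards [herase] with y hy
      congr 1
      refine Finset.sum_congr rfl fun j hj => ?_
      rw [Function.update_of_ne (Finset.mem_erase.mp hj).1,
        hy j (Finset.mem_erase.mp hj).1]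
    filter_upwards [hDen i, hcae i] with xi hDxi hcxi
    have hD0 : (∫ y, gammaFn K φ (Function.update y i xi) ∂P) ≠ 0 :=
      (lt_of_lt_of_le hα0 hDxi).ne'
    show h i xi + schrL m K φ h i xi = 0
    unfold schrL
    rw [show MeasureTheory.Measure.pi m = P from hPdef.symm]
    rw [hnum xi, hcxi,
      mul_comm (∫ y, gammaFn K φ (Function.update y i xi) ∂P)
        (∑ j ∈ Finset.univ.erase i, c j),
      mul_div_assoc, div_self hD0, mul_one]
    rw [Finset.add_sum_erase Finset.univ c (Finset.mem_univ i)]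
    exact hsum
end

section
/- Dual optimality of Schrödinger potentials: let μ = (μ_1,…,μ_N) with μ_i ∈ L^∞(X_i,m_i), and for a tuple ψ = (ψ_1,…,ψ_N) of essentially bounded measurable functions define D(ψ) := Σ_{i=1}^N ∫_{X_i} ψ_i μ_i dm_i − ∫_X K(x) exp(Σ_{j=1}^N ψ_j(x_j)) dm(x). If φ is a tuple of essentially bounded measurable functions with T_i(φ) = μ_i m_i-a.e. for every i, then D(ψ) ≤ D(φ) for every tuple ψ of essentially bounded measurable functions; i.e. φ maximizes the dual functional D. -/
open MeasureTheory Filter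
open scoped ENNReal

section AuxLemmas

variable {α : Type*} [MeasurableSpace α] {μ : Measure α}

lemma memtop_bound {f : α → ℝ} (h : MeasureTheory.MemLp f ⊤ μ) :
    ∃ C : ℝ, 0 ≤ C ∧ ∀ᵐ x ∂μ, |f x| ≤ C := by
  have h2 := h.2
  rw [MeasureTheory.eLpNorm_exponent_top] at h2
  refine ⟨(eLpNormEssSup f μ).toReal, ENNReal.toReal_nonneg, ?_⟩
  filter_upwards [MeasureTheory.ae_le_eLpNormEssSup (f := f) (μ := μ)] with x hx
  have h3 := ENNReal.toReal_mono h2.ne hx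
  simpa [Real.norm_eq_abs] using h3

lemma integrable_of_bdd' [IsFiniteMeasure μ] {f : α → ℝ} {C : ℝ}
    (hf : Measurable f) (hb : ∀ᵐ x ∂μ, |f x| ≤ C) : Integrable f μ :=
  (memLp_top_of_bound hf.aestronglyMeasurable C
    (by simpa [Real.norm_eq_abs] using hb)).integrable le_top

lemma measurePreserving_update_pi {N : ℕ} {X : Fin N → Type*} [∀ i, MeasurableSpace (X i)]
    (m : ∀ i, Measure (X i)) [∀ i, IsProbabilityMeasure (m i)] (i : Fin N) :
    MeasurePreserving (fun p : X i × (∀ j, X j) => Function.update p.2 i p.1)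
      ((m i).prod (Measure.pi m)) (Measure.pi m) := by
  have hmeas : Measurable fun p : X i × (∀ j, X j) => Function.update p.2 i p.1 :=
    measurable_update'.comp measurable_swap
  refine ⟨hmeas, ?_⟩
  refine (Measure.pi_eq fun s hs => ?_).symm
  rw [Measure.map_apply hmeas (MeasurableSet.univ_pi hs)]
  have hpre : (fun p : X i × (∀ j, X j) => Function.update p.2 i p.1) ⁻¹' Set.pi Set.univ s
      = s i ×ˢ Set.pi Set.univ (Function.update s i Set.univ) := by
    ext ⟨xi, y⟩
    simp only [Set.mem_preimage, Set.mem_univ_pi, Set.mem_prod]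
    constructor
    · intro h
      refine ⟨by simpa using h i, fun j => ?_⟩
      rcases eq_or_ne j i with rfl | hj
      · simp
      · simpa [Function.update_of_ne hj] using h j
    · rintro ⟨h1, h2⟩ j
      rcases eq_or_ne j i with rfl | hj
      · simpa using h1
      · have := h2 j
        simpa [Function.update_of_ne hj] using this
  rw [hpre, Measure.prod_prod, Measure.pi_pi]
  have hcongr : ∀ j ∈ Finset.univ, m j (Function.update s i Set.univ j)
      = Function.update (fun j => m j (s j)) i 1 j := by
    intro j _
    rcases eq_or_ne j i with rfl | hj
    · simp
    · simp [Function.update_of_ne hj]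
  rw [Finset.prod_congr rfl hcongr,
    Finset.prod_update_of_mem (Finset.mem_univ i), one_mul,
    ← Finset.mul_prod_erase Finset.univ _ (Finset.mem_univ i), Finset.erase_eq]

lemma integral_eval_mul {N : ℕ} {X : Fin N → Type*} [∀ i, MeasurableSpace (X i)]
    (m : ∀ i, Measure (X i)) [∀ i, IsProbabilityMeasure (m i)] (i : Fin N)
    {g : X i → ℝ} {f : (∀ j, X j) → ℝ} (hg : Measurable g) (hf : Measurable f)
    {Cg Cf : ℝ} (hgb : ∀ᵐ xi ∂m i, |g xi| ≤ Cg) (hfb : ∀ᵐ x ∂Measure.pi m, |f x| ≤ Cf) :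
    ∫ x, g (x i) * f x ∂Measure.pi m
      = ∫ xi, g xi * ∫ y, f (Function.update y i xi) ∂Measure.pi m ∂m i := by
  have hmp := measurePreserving_update_pi m i
  have hmeasF : Measurable fun x : ∀ j, X j => g (x i) * f x :=
    (hg.comp (measurable_pi_apply i)).mul hf
  have h1 : ∫ x, g (x i) * f x
        ∂(Measure.map (fun p : X i × (∀ j, X j) => Function.update p.2 i p.1)
          ((m i).prod (Measure.pi m)))
      = ∫ p : X i × (∀ j, X j), g ((Function.update p.2 i p.1) i) * f (Function.update p.2 i p.1)
          ∂(m i).prod (Measure.pi m) :=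
    integral_map hmp.measurable.aemeasurable hmeasF.aestronglyMeasurable
  rw [hmp.map_eq] at h1
  have h2 : (fun p : X i × (∀ j, X j) =>
        g ((Function.update p.2 i p.1) i) * f (Function.update p.2 i p.1))
      = fun p => g p.1 * f (Function.update p.2 i p.1) := by
    funext p; rw [Function.update_self]
  have hg' : ∀ᵐ p ∂(m i).prod (Measure.pi m), |g p.1| ≤ Cg :=
    Measure.quasiMeasurePreserving_fst.tendsto_ae.eventually hgb
  have hf' : ∀ᵐ p ∂(m i).prod (Measure.pi m), |f (Function.update p.2 i p.1)| ≤ Cf :=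
    hmp.quasiMeasurePreserving.tendsto_ae.eventually hfb
  have hbnd : ∀ᵐ p ∂(m i).prod (Measure.pi m),
      |g p.1 * f (Function.update p.2 i p.1)| ≤ Cg * Cf := by
    filter_upwards [hg', hf'] with p h1 h2
    rw [abs_mul]
    exact mul_le_mul h1 h2 (abs_nonneg _) ((abs_nonneg _).trans h1)
  have hint : Integrable (fun p : X i × (∀ j, X j) => g p.1 * f (Function.update p.2 i p.1))
      ((m i).prod (Measure.pi m)) :=
    integrable_of_bdd' ((hg.comp measurable_fst).mul (hf.comp hmp.measurable)) hbnd
  rw [h1, h2, MeasureTheory.integral_prod _ hint]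
  simp_rw [MeasureTheory.integral_const_mul]

end AuxLemmas

/-- Dual optimality of Schrödinger potentials: any solution `φ` of
`T(φ) = μ` maximizes the dual functional
`D(ψ) = ∑ ∫ ψ_i μ_i dm_i − ∫ K exp(∑ ψ_j(x_j)) dm`. -/


theorem dual_optimality
    {N : ℕ} (hN : 2 ≤ N) {X : Fin N → Type*} [∀ i, MeasurableSpace (X i)]
    (m : ∀ i, MeasureTheory.Measure (X i)) [∀ i, MeasureTheory.IsProbabilityMeasure (m i)]
    (K : (∀ i, X i) → ℝ) (a b : ℝ) (ha : 0 < a) (hab : a ≤ b)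
    (hK : Measurable K) (hKb : ∀ᵐ x ∂MeasureTheory.Measure.pi m, a ≤ K x ∧ K x ≤ b)
    (μ : ∀ i, X i → ℝ) (hμ : BddTuple m μ)
    (φ : ∀ i, X i → ℝ) (hφ : BddTuple m φ) (hTφ : ∀ i, schrT m K φ i =ᵐ[m i] μ i) :
    ∀ ψ : ∀ i, X i → ℝ, BddTuple m ψ →
      (∑ i, ∫ x, ψ i x * μ i x ∂m i) -
          ∫ x, K x * Real.exp (∑ j, ψ j (x j)) ∂MeasureTheory.Measure.pi m ≤
        (∑ i, ∫ x, φ i x * μ i x ∂m i) -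
          ∫ x, K x * Real.exp (∑ j, φ j (x j)) ∂MeasureTheory.Measure.pi m := by
  intro ψ hψ
  classical
  choose Cφ hCφ0 hCφ using fun i => memtop_bound (hφ i).2
  choose Cψ hCψ0 hCψ using fun i => memtop_bound (hψ i).2
  choose Cμ hCμ0 hCμ using fun i => memtop_bound (hμ i).2
  set π := MeasureTheory.Measure.pi m with hπ
  -- sums
  set F : (∀ j, X j) → ℝ := fun x => ∑ j, φ j (x j) with hF
  set G : (∀ j, X j) → ℝ := fun x => ∑ j, ψ j (x j) with hG
  have hFm : Measurable F := Finset.measurable_sum _ fun j _ =>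
    (hφ j).1.comp (measurable_pi_apply j)
  have hGm : Measurable G := Finset.measurable_sum _ fun j _ =>
    (hψ j).1.comp (measurable_pi_apply j)
  have hγm : Measurable (gammaFn K φ) := hK.mul (Real.measurable_exp.comp hFm)
  have hKGm : Measurable (fun x => K x * Real.exp (G x)) :=
    hK.mul (Real.measurable_exp.comp hGm)
  -- a.e. coordinate bounds on the product space
  have haeφ : ∀ᵐ x ∂π, ∀ j, |φ j (x j)| ≤ Cφ j := by
    rw [MeasureTheory.ae_all_iff]
    intro j
    exact Measure.tendsto_eval_ae_ae.eventually (hCφ j)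
  have haeψ : ∀ᵐ x ∂π, ∀ j, |ψ j (x j)| ≤ Cψ j := by
    rw [MeasureTheory.ae_all_iff]
    intro j
    exact Measure.tendsto_eval_ae_ae.eventually (hCψ j)
  have hFb : ∀ᵐ x ∂π, |F x| ≤ ∑ j, Cφ j := by
    filter_upwards [haeφ] with x hx
    exact (Finset.abs_sum_le_sum_abs _ _).trans (Finset.sum_le_sum fun j _ => hx j)
  have hGb : ∀ᵐ x ∂π, |G x| ≤ ∑ j, Cψ j := by
    filter_upwards [haeψ] with x hx
    exact (Finset.abs_sum_le_sum_abs _ _).trans (Finset.sum_le_sum fun j _ => hx j)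
  have hγb : ∀ᵐ x ∂π, |gammaFn K φ x| ≤ b * Real.exp (∑ j, Cφ j) := by
    filter_upwards [hKb, hFb] with x hx hFx
    have h1 : |K x| ≤ b := abs_le.2 ⟨by linarith [hx.1], hx.2⟩
    have h2 : Real.exp (F x) ≤ Real.exp (∑ j, Cφ j) :=
      Real.exp_le_exp.2 ((le_abs_self _).trans hFx)
    calc |gammaFn K φ x| = |K x| * Real.exp (F x) := by
          rw [gammaFn, abs_mul, abs_of_pos (Real.exp_pos _)]
      _ ≤ b * Real.exp (∑ j, Cφ j) :=
          mul_le_mul h1 h2 (Real.exp_pos _).le ((abs_nonneg _).trans h1)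
  have hKGb : ∀ᵐ x ∂π, |K x * Real.exp (G x)| ≤ b * Real.exp (∑ j, Cψ j) := by
    filter_upwards [hKb, hGb] with x hx hGx
    have h1 : |K x| ≤ b := abs_le.2 ⟨by linarith [hx.1], hx.2⟩
    have h2 : Real.exp (G x) ≤ Real.exp (∑ j, Cψ j) :=
      Real.exp_le_exp.2 ((le_abs_self _).trans hGx)
    calc |K x * Real.exp (G x)| = |K x| * Real.exp (G x) := by
          rw [abs_mul, abs_of_pos (Real.exp_pos _)]
      _ ≤ b * Real.exp (∑ j, Cψ j) :=
          mul_le_mul h1 h2 (Real.exp_pos _).le ((abs_nonneg _).trans h1)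
  -- integrability
  have hintγ : Integrable (gammaFn K φ) π := integrable_of_bdd' hγm hγb
  have hintKG : Integrable (fun x => K x * Real.exp (G x)) π := integrable_of_bdd' hKGm hKGb
  have hintFGγ : Integrable (fun x => (F x - G x) * gammaFn K φ x) π := by
    refine integrable_of_bdd' ((hFm.sub hGm).mul hγm)
      (C := (∑ j, Cφ j + ∑ j, Cψ j) * (b * Real.exp (∑ j, Cφ j))) ?_
    filter_upwards [hFb, hGb, hγb] with x h1 h2 h3
    rw [abs_mul]
    refine mul_le_mul ?_ h3 (abs_nonneg _)
      (add_nonneg (Finset.sum_nonneg fun j _ => hCφ0 j) (Finset.sum_nonneg fun j _ => hCψ0 j))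
    calc |F x - G x| ≤ |F x| + |G x| := abs_sub _ _
      _ ≤ ∑ j, Cφ j + ∑ j, Cψ j := add_le_add h1 h2
  -- key per-coordinate identity
  have key : ∀ i, ∫ xi, (φ i xi - ψ i xi) * μ i xi ∂m i
      = ∫ x, (φ i (x i) - ψ i (x i)) * gammaFn K φ x ∂π := by
    intro i
    have hgb' : ∀ᵐ xi ∂m i, |φ i xi - ψ i xi| ≤ Cφ i + Cψ i := by
      filter_upwards [hCφ i, hCψ i] with xi h1 h2
      calc |φ i xi - ψ i xi| ≤ |φ i xi| + |ψ i xi| := abs_sub _ _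
        _ ≤ Cφ i + Cψ i := add_le_add h1 h2
    have h1 : ∫ xi, (φ i xi - ψ i xi) * μ i xi ∂m i
        = ∫ xi, (φ i xi - ψ i xi) * schrT m K φ i xi ∂m i := by
      refine integral_congr_ae ?_
      filter_upwards [hTφ i] with xi h
      rw [h]
    rw [h1]
    simp only [schrT]
    exact (integral_eval_mul m i ((hφ i).1.sub (hψ i).1) hγm hgb' hγb).symm
  -- summed identity
  have hintterm : ∀ i : Fin N, Integrable (fun x => (φ i (x i) - ψ i (x i)) * gammaFn K φ x) π := by
    intro i
    refine integrable_of_bdd'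
      ((((hφ i).1.comp (measurable_pi_apply i)).sub
        ((hψ i).1.comp (measurable_pi_apply i))).mul hγm)
      (C := (Cφ i + Cψ i) * (b * Real.exp (∑ j, Cφ j))) ?_
    filter_upwards [haeφ, haeψ, hγb] with x h1 h2 h3
    rw [abs_mul]
    refine mul_le_mul ?_ h3 (abs_nonneg _) (add_nonneg (hCφ0 i) (hCψ0 i))
    calc |φ i (x i) - ψ i (x i)| ≤ |φ i (x i)| + |ψ i (x i)| := abs_sub _ _
      _ ≤ Cφ i + Cψ i := add_le_add (h1 i) (h2 i)
  have hsum : ∑ i, ∫ xi, (φ i xi - ψ i xi) * μ i xi ∂m i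
      = ∫ x, (F x - G x) * gammaFn K φ x ∂π := by
    simp_rw [key]
    rw [← integral_finset_sum _ fun i _ => hintterm i]
    congr 1
    funext x
    rw [← Finset.sum_mul]
    congr 1
    rw [hF, hG]
    simp [Finset.sum_sub_distrib]
  -- splitting the per-coordinate integrals
  have hintφμ : ∀ i : Fin N, Integrable (fun xi => φ i xi * μ i xi) (m i) := by
    intro i
    refine integrable_of_bdd' ((hφ i).1.mul (hμ i).1) (C := Cφ i * Cμ i) ?_
    filter_upwards [hCφ i, hCμ i] with xi h1 h2
    rw [abs_mul]
    exact mul_le_mul h1 h2 (abs_nonneg _) (hCφ0 i)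
  have hintψμ : ∀ i : Fin N, Integrable (fun xi => ψ i xi * μ i xi) (m i) := by
    intro i
    refine integrable_of_bdd' ((hψ i).1.mul (hμ i).1) (C := Cψ i * Cμ i) ?_
    filter_upwards [hCψ i, hCμ i] with xi h1 h2
    rw [abs_mul]
    exact mul_le_mul h1 h2 (abs_nonneg _) (hCψ0 i)
  have hsub : ∀ i : Fin N, ∫ xi, (φ i xi - ψ i xi) * μ i xi ∂m i
      = (∫ xi, φ i xi * μ i xi ∂m i) - ∫ xi, ψ i xi * μ i xi ∂m i := by
    intro i
    rw [← integral_sub (hintφμ i) (hintψμ i)]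
    congr 1
    funext xi
    ring
  -- main nonnegativity
  have hmain : 0 ≤ ∫ x, ((F x - G x) * gammaFn K φ x - gammaFn K φ x
      + K x * Real.exp (G x)) ∂π := by
    refine integral_nonneg_of_ae ?_
    filter_upwards [hKb] with x hx
    simp only [Pi.zero_apply]
    have hK0 : 0 < K x := lt_of_lt_of_le ha hx.1
    have hγ0 : 0 ≤ gammaFn K φ x := by
      rw [gammaFn]
      positivity
    have hexp : G x - F x + 1 ≤ Real.exp (G x - F x) := by
      have := Real.add_one_le_exp (G x - F x)
      linarith
    have hKG : K x * Real.exp (G x) = gammaFn K φ x * Real.exp (G x - F x) := by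
      rw [gammaFn, mul_assoc, ← Real.exp_add]
      rw [hF]
      ring_nf
    rw [hKG]
    nlinarith [mul_le_mul_of_nonneg_left hexp hγ0]
  have hsplit : ∫ x, ((F x - G x) * gammaFn K φ x - gammaFn K φ x
        + K x * Real.exp (G x)) ∂π
      = (∫ x, (F x - G x) * gammaFn K φ x ∂π) - (∫ x, gammaFn K φ x ∂π)
        + ∫ x, K x * Real.exp (G x) ∂π := by
    have hint1 : Integrable (fun x => (F x - G x) * gammaFn K φ x - gammaFn K φ x) π :=
      hintFGγ.sub hintγ
    rw [integral_add hint1 hintKG, integral_sub hintFGγ hintγ]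
  -- assemble
  have hsumsub : ∑ i, ∫ xi, (φ i xi - ψ i xi) * μ i xi ∂m i
      = (∑ i, ∫ xi, φ i xi * μ i xi ∂m i) - ∑ i, ∫ xi, ψ i xi * μ i xi ∂m i := by
    rw [← Finset.sum_sub_distrib]
    exact Finset.sum_congr rfl fun i _ => hsub i
  have hγeq : ∫ x, K x * Real.exp (∑ j, φ j (x j)) ∂π = ∫ x, gammaFn K φ x ∂π := rfl
  have hGeq : ∫ x, K x * Real.exp (∑ j, ψ j (x j)) ∂π = ∫ x, K x * Real.exp (G x) ∂π := rfl
  rw [hγeq, hGeq]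
  have h1 := hsum
  rw [hsumsub] at h1
  have h2 : 0 ≤ (∫ x, (F x - G x) * gammaFn K φ x ∂π) - (∫ x, gammaFn K φ x ∂π)
      + ∫ x, K x * Real.exp (G x) ∂π := by
    rw [← hsplit]
    exact hmain
  linarith [h1, h2]
end

section
/- Primal optimality of the Schrödinger bridge: let μ = (μ_1,…,μ_N) with μ_i ∈ L^∞(X_i,m_i) and let φ be a tuple of essentially bounded measurable functions with T_i(φ) = μ_i m_i-a.e. for every i; set γ(x) := K(x) exp(Σ_{j=1}^N φ_j(x_j)). Then for every probability-proportional measure q on X of the form q = ρ m with ρ ≥ 0 measurable, such that for each i the i-th marginal of q equals μ_i m_i, one has ∫_X (log(ρ(x)/K(x)) − 1) ρ(x) dm(x) ≥ ∫_X (log(γ(x)/K(x)) − 1) γ(x) dm(x) (with the left side interpreted as +∞ when the integral is not defined); i.e. q = γ m minimizes the relative entropy H(·|Km) over all measures with marginals μ_i m_i. -/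
open MeasureTheory Filter
open scoped ENNReal

open scoped NNReal

lemma exists_ae_abs_bound {α : Type*} [MeasurableSpace α] {μ : Measure α} {f : α → ℝ}
    (h : MemLp f ⊤ μ) : ∃ C : ℝ, 0 ≤ C ∧ ∀ᵐ x ∂μ, |f x| ≤ C := by
  have h1 := h.2
  rw [eLpNorm_exponent_top] at h1
  refine ⟨(eLpNormEssSup f μ).toReal, ENNReal.toReal_nonneg, ?_⟩
  filter_upwards [ae_le_eLpNormEssSup (f := f) (μ := μ)] with x hx
  have := ENNReal.toReal_mono h1.ne hx
  simpa [Real.norm_eq_abs] using this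

lemma key_convexity {s t k : ℝ} (hs : 0 ≤ s) (ht : 0 < t) (hk : 0 < k) :
    (Real.log (t / k) - 1) * t + Real.log (t / k) * (s - t) ≤ (Real.log (s / k) - 1) * s := by
  rcases hs.eq_or_lt with h | h
  · rw [← h]
    have he : (Real.log (t / k) - 1) * t + Real.log (t / k) * (0 - t) = -t := by ring
    rw [he, mul_zero]
    linarith
  · have hu : 0 < s / k := div_pos h hk
    have hv : 0 < t / k := div_pos ht hk
    have hlog : Real.log (t / k) - Real.log (s / k) = Real.log (t / s) := by
      rw [← Real.log_div hv.ne' hu.ne']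
      congr 1
      field_simp
    have h2 : Real.log (t / s) ≤ t / s - 1 := Real.log_le_sub_one_of_pos (div_pos ht h)
    have h3 : s * Real.log (t / s) ≤ t - s := by
      have h4 := mul_le_mul_of_nonneg_left h2 h.le
      have h5 : s * (t / s - 1) = t - s := by field_simp
      linarith [h4, h5.le]
    have key : Real.log (t / k) * s - s * Real.log (t / s) = Real.log (s / k) * s := by
      rw [← hlog]; ring
    have e1 : (Real.log (t / k) - 1) * t + Real.log (t / k) * (s - t)
        = Real.log (t / k) * s - t := by ring
    have e2 : (Real.log (s / k) - 1) * s = Real.log (s / k) * s - s := by ring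
    rw [e1, e2]
    linarith

lemma map_update_pi {N : ℕ} {X : Fin N → Type*} [∀ i, MeasurableSpace (X i)]
    (m : ∀ i, Measure (X i)) [∀ i, IsProbabilityMeasure (m i)] (j : Fin N) :
    Measure.map (fun p : X j × (∀ i, X i) => Function.update p.2 j p.1)
      ((m j).prod (Measure.pi m)) = Measure.pi m := by
  have hmeas : Measurable (fun p : X j × (∀ i, X i) => Function.update p.2 j p.1) :=
    measurable_update'.comp (measurable_snd.prodMk measurable_fst)
  refine (Measure.pi_eq fun s hs => ?_).symm
  rw [Measure.map_apply hmeas (MeasurableSet.univ_pi hs)]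
  have hpre : (fun p : X j × (∀ i, X i) => Function.update p.2 j p.1) ⁻¹' (Set.pi Set.univ s)
      = s j ×ˢ (Set.pi Set.univ (Function.update s j Set.univ)) := by
    ext ⟨t, y⟩
    simp only [Set.mem_preimage, Set.mem_pi, Set.mem_univ, true_implies, Set.mem_prod]
    constructor
    · intro h
      refine ⟨by simpa using h j, fun i => ?_⟩
      by_cases hij : i = j
      · subst hij; simp
      · have h2 := h i
        rw [Function.update_of_ne hij] at h2
        rw [Function.update_of_ne hij]
        exact h2
    · rintro ⟨ht, hy⟩ i
      by_cases hij : i = j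
      · subst hij; simpa using ht
      · have h2 := hy i
        rw [Function.update_of_ne hij] at h2 ⊢
        exact h2
  rw [hpre, Measure.prod_prod, Measure.pi_pi]
  have hfun : (fun i => m i (Function.update s j Set.univ i))
      = Function.update (fun i => m i (s i)) j 1 := by
    funext i
    by_cases hij : i = j
    · subst hij; simp
    · rw [Function.update_of_ne hij, Function.update_of_ne hij]
  calc m j (s j) * ∏ i, m i (Function.update s j Set.univ i)
      = m j (s j) * ∏ i, Function.update (fun i => m i (s i)) j 1 i := by rw [hfun]
    _ = m j (s j) * ((1 : ℝ≥0∞) * ∏ i ∈ Finset.univ.erase j, m i (s i)) := by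
        rw [Finset.prod_update_of_mem (Finset.mem_univ j), Finset.sdiff_singleton_eq_erase]
    _ = ∏ i, m i (s i) := by
        rw [one_mul]
        exact Finset.mul_prod_erase Finset.univ (fun i => m i (s i)) (Finset.mem_univ j)

lemma integral_eq_integral_update {N : ℕ} {X : Fin N → Type*} [∀ i, MeasurableSpace (X i)]
    (m : ∀ i, Measure (X i)) [∀ i, IsProbabilityMeasure (m i)] (j : Fin N)
    (f : (∀ i, X i) → ℝ) (hfm : Measurable f)
    (hfi : Integrable (fun p : X j × (∀ i, X i) => f (Function.update p.2 j p.1))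
      ((m j).prod (Measure.pi m))) :
    ∫ x, f x ∂Measure.pi m = ∫ t, ∫ y, f (Function.update y j t) ∂Measure.pi m ∂m j := by
  have hmeas : Measurable (fun p : X j × (∀ i, X i) => Function.update p.2 j p.1) :=
    measurable_update'.comp (measurable_snd.prodMk measurable_fst)
  conv_lhs => rw [← map_update_pi m j]
  rw [integral_map hmeas.aemeasurable]
  · exact integral_prod _ hfi
  · rw [map_update_pi m j]; exact hfm.aestronglyMeasurable


/-- Primal optimality of the Schrödinger bridge: `q = γ m` with
`γ = K exp(∑ φ_j)` minimizes the relative entropy `H(·|Km)` among all measures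
`ρ m` with marginals `μ_i m_i` (for which the entropy is defined; otherwise the
left-hand side is interpreted as `+∞` and the inequality is trivial). -/
theorem primal_optimality
    {N : ℕ} (hN : 2 ≤ N) {X : Fin N → Type*} [∀ i, MeasurableSpace (X i)]
    (m : ∀ i, MeasureTheory.Measure (X i)) [∀ i, MeasureTheory.IsProbabilityMeasure (m i)]
    (K : (∀ i, X i) → ℝ) (a b : ℝ) (ha : 0 < a) (hab : a ≤ b)
    (hK : Measurable K) (hKb : ∀ᵐ x ∂MeasureTheory.Measure.pi m, a ≤ K x ∧ K x ≤ b)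
    (μ : ∀ i, X i → ℝ) (hμ : BddTuple m μ)
    (φ : ∀ i, X i → ℝ) (hφ : BddTuple m φ) (hTφ : ∀ i, schrT m K φ i =ᵐ[m i] μ i)
    (ρ : (∀ i, X i) → ℝ) (hρm : Measurable ρ) (hρ0 : ∀ x, 0 ≤ ρ x)
    (hmarg : ∀ i, MeasureTheory.Measure.map (fun x => x i)
        ((MeasureTheory.Measure.pi m).withDensity fun x => ENNReal.ofReal (ρ x)) =
      (m i).withDensity fun t => ENNReal.ofReal (μ i t))
    (hint : Integrable (fun x => (Real.log (ρ x / K x) - 1) * ρ x)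
      (MeasureTheory.Measure.pi m)) :
    ∫ x, (Real.log (gammaFn K φ x / K x) - 1) * gammaFn K φ x ∂MeasureTheory.Measure.pi m ≤
      ∫ x, (Real.log (ρ x / K x) - 1) * ρ x ∂MeasureTheory.Measure.pi m := by
  classical
  set P := MeasureTheory.Measure.pi m with hP
  set g := gammaFn K φ with hg
  set S := fun x : ∀ i, X i => ∑ j, φ j (x j) with hS
  have hSm : Measurable S :=
    Finset.measurable_sum _ fun j _ => (hφ j).1.comp (measurable_pi_apply j)
  have hgm : Measurable g := hK.mul (Real.measurable_exp.comp hSm)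
  choose C hC0 hCae using fun j => exists_ae_abs_bound (hφ j).2
  set CS := ∑ j, C j with hCS
  have hCS0 : 0 ≤ CS := Finset.sum_nonneg fun j _ => hC0 j
  have hφP : ∀ j : Fin N, ∀ᵐ x ∂P, |φ j (x j)| ≤ C j := fun j =>
    (Measure.tendsto_eval_ae_ae (μ := m) (i := j)).eventually (hCae j)
  have hSP : ∀ᵐ x ∂P, |S x| ≤ CS := by
    have hall : ∀ᵐ x ∂P, ∀ j, |φ j (x j)| ≤ C j := ae_all_iff.2 hφP
    filter_upwards [hall] with x hx
    calc |S x| ≤ ∑ j, |φ j (x j)| := Finset.abs_sum_le_sum_abs _ _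
      _ ≤ ∑ j, C j := Finset.sum_le_sum fun j _ => hx j
  have hKP : ∀ᵐ x ∂P, a ≤ K x ∧ K x ≤ b := hKb
  have hgpos : ∀ᵐ x ∂P, 0 < g x := by
    filter_upwards [hKP] with x hx
    exact mul_pos (lt_of_lt_of_le ha hx.1) (Real.exp_pos _)
  have hgbound : ∀ᵐ x ∂P, ‖g x‖ ≤ b * Real.exp CS := by
    filter_upwards [hKP, hSP] with x hx hs
    have h1 : 0 < K x := lt_of_lt_of_le ha hx.1
    have hgx : g x = K x * Real.exp (S x) := rfl
    rw [Real.norm_eq_abs, hgx, abs_of_pos (mul_pos h1 (Real.exp_pos _))]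
    have h2 : Real.exp (S x) ≤ Real.exp CS := Real.exp_le_exp.2 (le_of_abs_le hs)
    exact mul_le_mul hx.2 h2 (Real.exp_pos _).le (le_trans ha.le hab)
  have hg_int : Integrable g P :=
    (integrable_const (b * Real.exp CS)).mono' hgm.aestronglyMeasurable hgbound
  -- integrability of ρ
  have i0 : Fin N := ⟨0, by omega⟩
  obtain ⟨Cμ, hCμ0, hCμ⟩ := exists_ae_abs_bound (hμ i0).2
  have hmass : ∫⁻ x, ENNReal.ofReal (ρ x) ∂P ≠ ∞ := by
    have h1 : (P.withDensity fun x => ENNReal.ofReal (ρ x)) Set.univ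
        = ((m i0).withDensity fun t => ENNReal.ofReal (μ i0 t)) Set.univ := by
      rw [← hmarg i0, Measure.map_apply (measurable_pi_apply i0) MeasurableSet.univ,
        Set.preimage_univ]
    rw [withDensity_apply _ MeasurableSet.univ, setLIntegral_univ,
      withDensity_apply _ MeasurableSet.univ, setLIntegral_univ] at h1
    rw [h1]
    have h2 : ∫⁻ t, ENNReal.ofReal (μ i0 t) ∂m i0 ≤ ENNReal.ofReal Cμ := by
      calc ∫⁻ t, ENNReal.ofReal (μ i0 t) ∂m i0
          ≤ ∫⁻ _, ENNReal.ofReal Cμ ∂m i0 := by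
            refine lintegral_mono_ae ?_
            filter_upwards [hCμ] with t ht
            exact ENNReal.ofReal_le_ofReal (le_trans (le_abs_self _) ht)
        _ = ENNReal.ofReal Cμ := by simp
    exact (lt_of_le_of_lt h2 ENNReal.ofReal_lt_top).ne
  have hρ_int : Integrable ρ P := by
    refine ⟨hρm.aestronglyMeasurable, ?_⟩
    have hco : ∀ x, ‖ρ x‖ₑ = ENNReal.ofReal (ρ x) := fun x => by
      rw [← ofReal_norm, Real.norm_eq_abs, abs_of_nonneg (hρ0 x)]
    rw [hasFiniteIntegral_def]
    simp_rw [hco]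
    exact hmass.lt_top
  have hρS_int : Integrable (fun x => S x * ρ x) P := by
    refine (hρ_int.const_mul CS).mono' (hSm.mul hρm).aestronglyMeasurable ?_
    filter_upwards [hSP] with x hx
    rw [Real.norm_eq_abs, abs_mul, abs_of_nonneg (hρ0 x)]
    exact mul_le_mul_of_nonneg_right hx (hρ0 x)
  have hSg_int : Integrable (fun x => S x * g x) P := by
    refine (integrable_const (CS * (b * Real.exp CS))).mono'
      (hSm.mul hgm).aestronglyMeasurable ?_
    filter_upwards [hSP, hgbound] with x hx hgx
    rw [Real.norm_eq_abs, abs_mul]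
    exact mul_le_mul hx (by simpa using hgx) (abs_nonneg _) hCS0
  have hφg_int : ∀ j, Integrable (fun x => φ j (x j) * g x) P := by
    intro j
    refine (integrable_const (C j * (b * Real.exp CS))).mono'
      (((hφ j).1.comp (measurable_pi_apply j)).mul hgm).aestronglyMeasurable ?_
    filter_upwards [hφP j, hgbound] with x hx hgx
    rw [Real.norm_eq_abs, abs_mul]
    exact mul_le_mul hx (by simpa using hgx) (abs_nonneg _) (hC0 j)
  have hφρ_int : ∀ j, Integrable (fun x => φ j (x j) * ρ x) P := by
    intro j
    refine (hρ_int.const_mul (C j)).mono'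
      (((hφ j).1.comp (measurable_pi_apply j)).mul hρm).aestronglyMeasurable ?_
    filter_upwards [hφP j] with x hx
    rw [Real.norm_eq_abs, abs_mul, abs_of_nonneg (hρ0 x)]
    exact mul_le_mul_of_nonneg_right hx (hρ0 x)
  -- measure preserving update map
  have hmeasU : ∀ j : Fin N,
      Measurable (fun p : X j × (∀ i, X i) => Function.update p.2 j p.1) := fun j =>
    measurable_update'.comp (measurable_snd.prodMk measurable_fst)
  have hMP : ∀ j : Fin N,
      MeasurePreserving (fun p : X j × (∀ i, X i) => Function.update p.2 j p.1)
        ((m j).prod P) P := fun j => ⟨hmeasU j, map_update_pi m j⟩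
  -- Part B : γ side marginals
  have hB : ∀ j, ∫ x, φ j (x j) * g x ∂P = ∫ t, φ j t * μ j t ∂m j := by
    intro j
    have hfm : Measurable (fun x => φ j (x j) * g x) :=
      ((hφ j).1.comp (measurable_pi_apply j)).mul hgm
    have hgb' : ∀ᵐ p ∂(m j).prod P, ‖g (Function.update p.2 j p.1)‖ ≤ b * Real.exp CS :=
      (hMP j).quasiMeasurePreserving.ae hgbound
    have hφb' : ∀ᵐ p ∂(m j).prod P, |φ j p.1| ≤ C j :=
      Measure.quasiMeasurePreserving_fst.ae (hCae j)
    have hprod_int : Integrable (fun p : X j × (∀ i, X i) =>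
        (fun x => φ j (x j) * g x) (Function.update p.2 j p.1)) ((m j).prod P) := by
      refine (integrable_const (C j * (b * Real.exp CS))).mono'
        ((hfm.comp (hmeasU j)).aestronglyMeasurable) ?_
      filter_upwards [hgb', hφb'] with p hg1 hφ1
      simp only [Function.update_self]
      rw [Real.norm_eq_abs, abs_mul]
      exact mul_le_mul hφ1 (by simpa using hg1) (abs_nonneg _) (hC0 j)
    have step := integral_eq_integral_update m j _ hfm hprod_int
    rw [step]
    have hin : ∀ t : X j, ∫ y, φ j (Function.update y j t j) * g (Function.update y j t) ∂P
        = φ j t * schrT m K φ j t := by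
      intro t
      simp_rw [Function.update_self]
      rw [integral_const_mul]
      rfl
    calc ∫ t, ∫ y, φ j (Function.update y j t j) * g (Function.update y j t) ∂P ∂m j
        = ∫ t, φ j t * schrT m K φ j t ∂m j := by
          refine integral_congr_ae (Eventually.of_forall fun t => hin t)
      _ = ∫ t, φ j t * μ j t ∂m j := by
          refine integral_congr_ae ?_
          filter_upwards [hTφ j] with t ht
          rw [ht]
  -- nonnegativity of μ j a.e.
  have hμ0 : ∀ j, ∀ᵐ t ∂m j, 0 ≤ μ j t := by
    intro j
    have h1 : ∀ᵐ p ∂(m j).prod P, 0 ≤ g (Function.update p.2 j p.1) :=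
      (hMP j).quasiMeasurePreserving.ae (hgpos.mono fun x hx => hx.le)
    have h2 := Measure.ae_ae_of_ae_prod h1
    filter_upwards [h2, hTφ j] with t ht hTt
    rw [← hTt]
    exact integral_nonneg_of_ae ht
  -- Part A : ρ side marginals
  have hA : ∀ j, ∫ x, φ j (x j) * ρ x ∂P = ∫ t, φ j t * μ j t ∂m j := by
    intro j
    have e1 : ∫ x, φ j (x j) ∂(P.withDensity fun x => ENNReal.ofReal (ρ x))
        = ∫ x, φ j (x j) * ρ x ∂P := by
      rw [show (fun x => ENNReal.ofReal (ρ x))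
          = fun x => (((fun y => Real.toNNReal (ρ y)) x : ℝ≥0) : ℝ≥0∞) from rfl,
        integral_withDensity_eq_integral_smul hρm.real_toNNReal]
      refine integral_congr_ae (Eventually.of_forall fun x => ?_)
      simp only [NNReal.smul_def, smul_eq_mul]
      rw [Real.coe_toNNReal _ (hρ0 x), mul_comm]
    have e2 : ∫ x, φ j (x j) ∂(P.withDensity fun x => ENNReal.ofReal (ρ x))
        = ∫ t, φ j t ∂((m j).withDensity fun t => ENNReal.ofReal (μ j t)) := by
      rw [← hmarg j]
      exact (integral_map (measurable_pi_apply j).aemeasurable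
        (hφ j).1.aestronglyMeasurable).symm
    have e3 : ∫ t, φ j t ∂((m j).withDensity fun t => ENNReal.ofReal (μ j t))
        = ∫ t, φ j t * μ j t ∂m j := by
      rw [show (fun t => ENNReal.ofReal (μ j t))
          = fun t => (((fun y => Real.toNNReal (μ j y)) t : ℝ≥0) : ℝ≥0∞) from rfl,
        integral_withDensity_eq_integral_smul (hμ j).1.real_toNNReal]
      refine integral_congr_ae ?_
      filter_upwards [hμ0 j] with t ht
      simp only [NNReal.smul_def, smul_eq_mul]
      rw [Real.coe_toNNReal _ ht, mul_comm]
    rw [← e1, e2, e3]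
  -- key identity
  have hkey : ∫ x, S x * g x ∂P = ∫ x, S x * ρ x ∂P := by
    have hg' : ∫ x, S x * g x ∂P = ∑ j, ∫ x, φ j (x j) * g x ∂P := by
      rw [← integral_finset_sum _ fun j _ => hφg_int j]
      refine integral_congr_ae (Eventually.of_forall fun x => ?_)
      show S x * _ = _
      rw [show S x = ∑ j, φ j (x j) from rfl, Finset.sum_mul]
    have hρ' : ∫ x, S x * ρ x ∂P = ∑ j, ∫ x, φ j (x j) * ρ x ∂P := by
      rw [← integral_finset_sum _ fun j _ => hφρ_int j]
      refine integral_congr_ae (Eventually.of_forall fun x => ?_)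
      show S x * _ = _
      rw [show S x = ∑ j, φ j (x j) from rfl, Finset.sum_mul]
    rw [hg', hρ']
    exact Finset.sum_congr rfl fun j _ => (hB j).trans (hA j).symm
  -- rewrite LHS
  have hLHS : ∫ x, (Real.log (g x / K x) - 1) * g x ∂P
      = ∫ x, S x * g x ∂P - ∫ x, g x ∂P := by
    have e : ∫ x, (Real.log (g x / K x) - 1) * g x ∂P = ∫ x, (S x * g x - g x) ∂P := by
      refine integral_congr_ae ?_
      filter_upwards [hKP] with x hx
      have hK0 : K x ≠ 0 := (lt_of_lt_of_le ha hx.1).ne'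
      have hgx : g x = K x * Real.exp (S x) := rfl
      rw [hgx, mul_div_cancel_left₀ _ hK0, Real.log_exp]
      ring
    rw [e, integral_sub hSg_int hg_int]
  have hmono : ∫ x, (S x * ρ x - g x) ∂P ≤ ∫ x, (Real.log (ρ x / K x) - 1) * ρ x ∂P := by
    refine integral_mono_ae (hρS_int.sub hg_int) hint ?_
    filter_upwards [hKP] with x hx
    have hK0 : 0 < K x := lt_of_lt_of_le ha hx.1
    have hgx : 0 < g x := mul_pos hK0 (Real.exp_pos _)
    have hlog : Real.log (g x / K x) = S x := by
      have hgx' : g x = K x * Real.exp (S x) := rfl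
      rw [hgx', mul_div_cancel_left₀ _ hK0.ne', Real.log_exp]
    calc S x * ρ x - g x
        = (Real.log (g x / K x) - 1) * g x + Real.log (g x / K x) * (ρ x - g x) := by
          rw [hlog]; ring
      _ ≤ _ := key_convexity (hρ0 x) hgx hK0
  calc ∫ x, (Real.log (g x / K x) - 1) * g x ∂P
      = ∫ x, S x * ρ x ∂P - ∫ x, g x ∂P := by rw [hLHS, hkey]
    _ = ∫ x, (S x * ρ x - g x) ∂P := (integral_sub hρS_int hg_int).symm
    _ ≤ _ := hmono
end
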